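/- arXiv:0909.1915 — 3 statements merged into one kernel-verified Lean document; each statement's English description precedes it below -/
import Mathlib

section
/- For all r > 0, a ≥ r, and 0 < y < 1/(2a), one has -(1/2)·log(1 - 2ry) - ry ≤ r²y²/(1 - 2ay). -/
open Real Set

lemma key_ineq (x : ℝ) (hx0 : 0 ≤ x) (hx1 : x < 1) :
    -Real.log (1 - x) - x ≤ x ^ 2 / (2 * (1 - x)) := by
  set f : ℝ → ℝ := fun t => t ^ 2 / (2 * (1 - t)) + t + Real.log (1 - t) with hf
  have hd : ∀ t ∈ Set.Ioo (0:ℝ) 1, HasDerivAt f (t ^ 2 / (2 * (1 - t) ^ 2)) t := by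
    intro t ht
    have ht1 : (1 : ℝ) - t ≠ 0 := by have := ht.2; intro h; nlinarith [ht.2]
    have h1 : HasDerivAt (fun s : ℝ => 1 - s) (-1) t := by
      simpa using (hasDerivAt_id t).const_sub 1
    have h2 : HasDerivAt (fun s : ℝ => Real.log (1 - s)) (-1 / (1 - t)) t :=
      h1.log ht1
    have h3 : HasDerivAt (fun s : ℝ => s ^ 2) (2 * t) t := by
      simpa using hasDerivAt_pow 2 t
    have h4 : HasDerivAt (fun s : ℝ => 2 * (1 - s)) (2 * (-1)) t := h1.const_mul 2
    have ht2 : 2 * (1 - t) ≠ 0 := by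
      intro h; apply ht1; linarith [mul_eq_zero.mp h]
    have h5 := h3.div h4 ht2
    have h6 := (h5.add (hasDerivAt_id t)).add h2
    refine h6.congr_deriv ?_
    field_simp
    ring
  have hcont : ContinuousOn f (Set.Ico (0:ℝ) 1) := by
    apply ContinuousOn.add
    apply ContinuousOn.add
    · apply ContinuousOn.div (by fun_prop) (by fun_prop)
      intro t ht
      have := ht.2
      intro h
      nlinarith [mul_eq_zero.mp h]
    · fun_prop
    · apply ContinuousOn.log (by fun_prop)
      intro t ht
      have := ht.2; intro h; nlinarith
  have hmono : MonotoneOn f (Set.Ico (0:ℝ) 1) := by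
    apply monotoneOn_of_deriv_nonneg (convex_Ico 0 1) hcont
    · intro t ht
      rw [interior_Ico] at ht
      exact ((hd t ht).differentiableAt).differentiableWithinAt
    · intro t ht
      rw [interior_Ico] at ht
      rw [(hd t ht).deriv]
      positivity
  have h0 : f 0 = 0 := by simp [hf]
  have hx : f 0 ≤ f x :=
    hmono (by constructor <;> norm_num) ⟨hx0, hx1⟩ hx0
  rw [h0] at hx
  simp only [hf] at hx
  linarith

theorem stmt_0 (r a y : ℝ) (hr : 0 < r) (ha : r ≤ a) (hy0 : 0 < y)
    (hy1 : y < 1 / (2 * a)) :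
    -(1 / 2) * Real.log (1 - 2 * r * y) - r * y ≤ r ^ 2 * y ^ 2 / (1 - 2 * a * y) := by
  have ha0 : 0 < a := lt_of_lt_of_le hr ha
  have hay : 2 * a * y < 1 := by
    have h2a : 0 < 2 * a := by linarith
    calc 2 * a * y < 2 * a * (1 / (2 * a)) := by
          exact mul_lt_mul_of_pos_left hy1 h2a
      _ = 1 := by field_simp
  have hry : 2 * r * y ≤ 2 * a * y := by nlinarith
  have hx0 : 0 ≤ 2 * r * y := by positivity
  have hx1 : 2 * r * y < 1 := lt_of_le_of_lt hry hay
  have key := key_ineq (2 * r * y) hx0 hx1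
  have heq : (2 * r * y) ^ 2 / (2 * (1 - 2 * r * y)) = 2 * (r ^ 2 * y ^ 2 / (1 - 2 * r * y)) := by
    have hne : (1:ℝ) - 2 * r * y ≠ 0 := by linarith
    field_simp
  have hdiv : r ^ 2 * y ^ 2 / (1 - 2 * r * y) ≤ r ^ 2 * y ^ 2 / (1 - 2 * a * y) := by
    apply div_le_div_of_nonneg_left (by positivity) (by linarith) (by linarith)
  rw [heq] at key
  linarith
end

section
/- For all r ≤ 0, a > 0, and 0 < y < 1/(2a), one has -(1/2)·log(1 - 2ry) - ry ≤ r²y²/(1 - 2ay). -/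
lemma aux_hasDeriv (x : ℝ) (hx : (0:ℝ) < 1 + x) :
    HasDerivAt (fun x : ℝ => Real.log (1 + x) - (x - x ^ 2 / 2))
      ((1 + x)⁻¹ - (1 - x)) x := by
  have h1 : HasDerivAt (fun x : ℝ => Real.log (1 + x)) ((1 + x)⁻¹) x := by
    simpa [Function.comp_def] using (Real.hasDerivAt_log hx.ne').comp x ((hasDerivAt_id x).const_add 1)
  have h2 : HasDerivAt (fun x : ℝ => x - x ^ 2 / 2) (1 - x) x := by
    have := (hasDerivAt_id x).sub ((hasDerivAt_pow 2 x).div_const 2)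
    refine this.congr_deriv ?_
    push_cast; ring
  exact h1.sub h2

lemma aux_log_lb (t : ℝ) (ht : 0 ≤ t) : t - t ^ 2 / 2 ≤ Real.log (1 + t) := by
  have h : MonotoneOn (fun x : ℝ => Real.log (1 + x) - (x - x ^ 2 / 2)) (Set.Ici 0) := by
    apply monotoneOn_of_deriv_nonneg (convex_Ici 0)
    · apply ContinuousOn.sub
      · refine Real.continuousOn_log.comp (by fun_prop) ?_
        intro x hx; simp only [Set.mem_Ici] at hx; simp; intro h; linarith
      · fun_prop
    · intro x hx
      simp only [interior_Ici, Set.mem_Ioi] at hx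
      exact (aux_hasDeriv x (by linarith)).differentiableAt.differentiableWithinAt
    · intro x hx
      simp only [interior_Ici, Set.mem_Ioi] at hx
      have h1 : (0:ℝ) < 1 + x := by linarith
      rw [(aux_hasDeriv x h1).deriv]
      have : (1 + x)⁻¹ - (1 - x) = x ^ 2 / (1 + x) := by
        field_simp; ring
      rw [this]; positivity
  have := h (Set.self_mem_Ici) (Set.mem_Ici.mpr ht) ht
  simp only [add_zero, Real.log_one] at this
  nlinarith

theorem stmt_1 (r a y : ℝ) (hr : r ≤ 0) (ha : 0 < a) (hy0 : 0 < y)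
    (hy1 : y < 1 / (2 * a)) :
    -(1 / 2) * Real.log (1 - 2 * r * y) - r * y ≤ r ^ 2 * y ^ 2 / (1 - 2 * a * y) := by
  have ht : 0 ≤ -2 * r * y := by nlinarith
  have hlog := aux_log_lb (-2 * r * y) ht
  have heq : 1 + -2 * r * y = 1 - 2 * r * y := by ring
  rw [heq] at hlog
  have hden : 0 < 1 - 2 * a * y := by
    have := (lt_div_iff₀ (by positivity : (0:ℝ) < 2 * a)).mp hy1
    nlinarith
  have h1 : -(1 / 2) * Real.log (1 - 2 * r * y) - r * y ≤ r ^ 2 * y ^ 2 := by nlinarith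
  have h2 : r ^ 2 * y ^ 2 ≤ r ^ 2 * y ^ 2 / (1 - 2 * a * y) := by
    rw [le_div_iff₀ hden]
    nlinarith [mul_nonneg (sq_nonneg r) (sq_nonneg y), mul_pos ha hy0]
  linarith
end

section
/- Let z be a standard Gaussian random variable and a, b real numbers. For all y with 0 < y < 1/(2·a⁺), where a⁺ = max(a, 0), one has log E[exp(y·(a·z² + b·z - a))] ≤ (a² + b²/2)·y² / (1 - 2·a⁺·y). -/
open MeasureTheory ProbabilityTheory Real
open scoped ENNReal NNReal

lemma aux_hasDerivA {x : ℝ} (hx : 0 < x) :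
    HasDerivAt (fun s : ℝ => (s - s⁻¹) / 2 - Real.log s)
      ((1 - -(x ^ 2)⁻¹) / 2 - x⁻¹) x :=
  (((hasDerivAt_id x).sub (hasDerivAt_inv hx.ne')).div_const 2).sub
    (Real.hasDerivAt_log hx.ne')

lemma aux_logA {t : ℝ} (ht : 1 ≤ t) : Real.log t ≤ (t - t⁻¹) / 2 := by
  have hmono : MonotoneOn (fun s : ℝ => (s - s⁻¹) / 2 - Real.log s) (Set.Ici 1) := by
    apply monotoneOn_of_deriv_nonneg (convex_Ici 1)
    · intro x hx
      have hx0 : (0:ℝ) < x := lt_of_lt_of_le one_pos hx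
      exact (aux_hasDerivA hx0).differentiableAt.continuousAt.continuousWithinAt
    · intro x hx
      rw [interior_Ici] at hx
      have hx0 : (0:ℝ) < x := lt_trans one_pos hx
      exact (aux_hasDerivA hx0).differentiableAt.differentiableWithinAt
    · intro x hx
      rw [interior_Ici] at hx
      have hx0 : (0:ℝ) < x := lt_trans one_pos hx
      rw [(aux_hasDerivA hx0).deriv]
      have h1 : x * x⁻¹ = 1 := mul_inv_cancel₀ hx0.ne'
      have h2 : (x^2)⁻¹ = x⁻¹ ^ 2 := by rw [← inv_pow]
      nlinarith [sq_nonneg (1 - x⁻¹), sq_nonneg x⁻¹]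
  have h := hmono (Set.self_mem_Ici) (show t ∈ Set.Ici 1 from ht) ht
  simp only [Real.log_one, inv_one] at h
  linarith

lemma aux_logB {w : ℝ} (hw : 0 ≤ w) : w - w ^ 2 / 2 ≤ Real.log (1 + w) := by
  have hD : ∀ x : ℝ, 0 < 1 + x →
      HasDerivAt (fun s : ℝ => Real.log (1 + s) - s + s ^ 2 / 2)
        ((1 / (1 + x)) - 1 + x) x := by
    intro x hx
    have h1 : HasDerivAt (fun s : ℝ => 1 + s) 1 x := (hasDerivAt_id x).const_add 1
    have h2 : HasDerivAt (fun s : ℝ => Real.log (1 + s)) (1 / (1 + x)) x :=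
      h1.log hx.ne'
    have h3 : HasDerivAt (fun s : ℝ => s ^ 2 / 2) x x := by
      simpa using ((hasDerivAt_pow 2 x).div_const 2)
    exact (h2.sub (hasDerivAt_id x)).add h3
  have hmono : MonotoneOn (fun s : ℝ => Real.log (1 + s) - s + s ^ 2 / 2) (Set.Ici 0) := by
    apply monotoneOn_of_deriv_nonneg (convex_Ici 0)
    · intro x hx
      have hx0 : (0:ℝ) < 1 + x := by simp at hx; linarith
      exact (hD x hx0).differentiableAt.continuousAt.continuousWithinAt
    · intro x hx
      rw [interior_Ici] at hx
      have hx0 : (0:ℝ) < 1 + x := by simp at hx; linarith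
      exact (hD x hx0).differentiableAt.differentiableWithinAt
    · intro x hx
      rw [interior_Ici] at hx
      have hx0 : (0:ℝ) < 1 + x := by simp at hx; linarith
      rw [(hD x hx0).deriv]
      have h1 : (1 + x) * (1 + x)⁻¹ = 1 := mul_inv_cancel₀ hx0.ne'
      rw [div_eq_mul_inv, one_mul]
      nlinarith [sq_nonneg x, inv_nonneg.mpr hx0.le]
  have h := hmono (Set.self_mem_Ici) (show w ∈ Set.Ici 0 from hw) hw
  simp only [add_zero, Real.log_one] at h
  linarith

lemma aux_integrable_rexp_quad {p : ℝ} (hp : 0 < p) (q : ℝ) :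
    Integrable (fun x : ℝ => Real.exp (-p * x ^ 2 + q * x)) := by
  have h := integrable_cexp_quadratic (b := (p : ℂ)) (by simpa using hp) (q : ℂ) 0
  have h2 := h.re
  refine h2.congr (Filter.Eventually.of_forall fun x => ?_)
  have hc : (-(p:ℂ) * x ^ 2 + q * x + 0) = ((-p * x ^ 2 + q * x : ℝ) : ℂ) := by
    push_cast; ring
  show (Complex.exp (-(p:ℂ) * (x:ℂ) ^ 2 + (q:ℂ) * x + 0)).re = _
  rw [hc, Complex.exp_ofReal_re]

lemma aux_integral_rexp_quad {p : ℝ} (hp : 0 < p) (q : ℝ) :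
    ∫ x : ℝ, Real.exp (-p * x ^ 2 + q * x)
      = Real.sqrt (π / p) * Real.exp (q ^ 2 / (4 * p)) := by
  have hb : ((-p : ℂ)).re < 0 := by simpa using hp
  have h := integral_cexp_quadratic hb (q : ℂ) 0
  have hL : (∫ x : ℝ, Complex.exp ((-p:ℂ) * x ^ 2 + (q:ℂ) * x + 0))
      = ((∫ x : ℝ, Real.exp (-p * x ^ 2 + q * x) : ℝ) : ℂ) := by
    have hfun : ∀ x : ℝ, Complex.exp ((-p:ℂ) * x ^ 2 + (q:ℂ) * x + 0)
        = ((Real.exp (-p * x ^ 2 + q * x) : ℝ) : ℂ) := by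
      intro x
      rw [Complex.ofReal_exp]
      congr 1
      push_cast; ring
    calc (∫ x : ℝ, Complex.exp ((-p:ℂ) * x ^ 2 + (q:ℂ) * x + 0))
        = ∫ x : ℝ, ((Real.exp (-p * x ^ 2 + q * x) : ℝ) : ℂ) := by simp_rw [hfun]
      _ = _ := integral_ofReal
  have hπp : (0:ℝ) ≤ π / p := le_of_lt (div_pos pi_pos hp)
  have hR : ((π : ℂ) / -(-p:ℂ)) ^ (1/2 : ℂ) * Complex.exp (0 - (q:ℂ)^2 / (4 * (-p:ℂ)))
      = ((Real.sqrt (π / p) * Real.exp (q ^ 2 / (4 * p)) : ℝ) : ℂ) := by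
    have h1 : ((π:ℂ) / -(-p:ℂ)) = ((π / p : ℝ) : ℂ) := by push_cast; ring
    have h2 : ((0:ℂ) - (q:ℂ)^2 / (4 * (-p:ℂ))) = ((q^2/(4*p) : ℝ) : ℂ) := by
      have h4 : ((p:ℂ)) ≠ 0 := by
        simpa using hp.ne'
      push_cast
      field_simp
      ring
    rw [h1, h2, ← Complex.ofReal_exp]
    have h3 : ((π / p : ℝ) : ℂ) ^ (1/2 : ℂ) = (((π / p) ^ (1/2 : ℝ) : ℝ) : ℂ) := by
      rw [Complex.ofReal_cpow hπp]
      norm_num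
    rw [h3, ← Real.rpow_natCast]
    rw [Real.sqrt_eq_rpow]
    push_cast
    ring
  rw [hL, hR] at h
  exact_mod_cast h

theorem stmt_3 (a b y : ℝ) (hy0 : 0 < y) (hy1 : 2 * max a 0 * y < 1) :
    Real.log (∫ z, Real.exp (y * (a * z ^ 2 + b * z - a)) ∂(gaussianReal 0 1)) ≤
      (a ^ 2 + b ^ 2 / 2) * y ^ 2 / (1 - 2 * max a 0 * y) := by
  have hmax : a ≤ max a 0 := le_max_left a 0
  have hay : 2 * (a * y) < 1 := by nlinarith
  set p : ℝ := 1/2 - a*y with hpdef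
  have hp0 : 0 < p := by rw [hpdef]; linarith
  have h2p : 4 * p = 2 * (1 - 2*(a*y)) := by rw [hpdef]; ring
  have hu1 : (0:ℝ) < 1 - 2*(a*y) := by linarith
  have hμ : gaussianReal 0 1 = volume.withDensity (gaussianPDF 0 1) :=
    gaussianReal_of_var_ne_zero 0 one_ne_zero
  have step1 : (∫ z, Real.exp (y * (a * z ^ 2 + b * z - a)) ∂(gaussianReal 0 1))
      = ∫ x : ℝ, gaussianPDFReal 0 1 x * Real.exp (y * (a * x ^ 2 + b * x - a)) := by
    rw [hμ]
    rw [show (gaussianPDF 0 1)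
        = (fun x => ((Real.toNNReal (gaussianPDFReal 0 1 x) : ℝ≥0) : ℝ≥0∞)) from rfl]
    rw [integral_withDensity_eq_integral_smul ((measurable_gaussianPDFReal 0 1).real_toNNReal) _]
    congr 1
    ext x
    rw [NNReal.smul_def, smul_eq_mul, Real.coe_toNNReal _ (gaussianPDFReal_nonneg 0 1 x)]
  have hpdf : ∀ x : ℝ, gaussianPDFReal 0 1 x * Real.exp (y * (a * x ^ 2 + b * x - a))
      = (Real.sqrt (2*π))⁻¹ * (Real.exp (-(y*a)) * Real.exp (-p * x^2 + (y*b) * x)) := by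
    intro x
    simp only [gaussianPDFReal, NNReal.coe_one, mul_one, sub_zero, hpdef]
    rw [mul_assoc, ← Real.exp_add, ← Real.exp_add]
    congr 1
    ring
  have hInt : (∫ x : ℝ, gaussianPDFReal 0 1 x * Real.exp (y * (a * x ^ 2 + b * x - a)))
      = (Real.sqrt (2*π))⁻¹ * (Real.exp (-(y*a)) *
          (Real.sqrt (π/p) * Real.exp ((y*b)^2/(4*p)))) := by
    simp_rw [hpdf]
    rw [integral_const_mul, integral_const_mul, aux_integral_rexp_quad hp0 (y*b)]
  have hc : (Real.sqrt (2*π))⁻¹ * Real.sqrt (π/p) = (Real.sqrt (1-2*(a*y)))⁻¹ := by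
    have harg : (2*π)⁻¹ * (π/p) = (1-2*(a*y))⁻¹ := by
      rw [show (1-2*(a*y)) = 2*p from by linarith]
      have hπ : π ≠ 0 := pi_ne_zero
      field_simp
    calc (Real.sqrt (2*π))⁻¹ * Real.sqrt (π/p)
        = Real.sqrt ((2*π)⁻¹ * (π/p)) := by
          rw [← Real.sqrt_inv, ← Real.sqrt_mul (by positivity)]
      _ = Real.sqrt ((1-2*(a*y))⁻¹) := by rw [harg]
      _ = (Real.sqrt (1-2*(a*y)))⁻¹ := Real.sqrt_inv _
  have hE : (Real.sqrt (2*π))⁻¹ * (Real.exp (-(y*a)) *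
        (Real.sqrt (π/p) * Real.exp ((y*b)^2/(4*p))))
      = Real.exp ((y*b)^2/(4*p) - y*a) / Real.sqrt (1-2*(a*y)) := by
    rw [show (Real.sqrt (2*π))⁻¹ * (Real.exp (-(y*a)) *
        (Real.sqrt (π/p) * Real.exp ((y*b)^2/(4*p))))
      = ((Real.sqrt (2*π))⁻¹ * Real.sqrt (π/p)) *
        (Real.exp (-(y*a)) * Real.exp ((y*b)^2/(4*p))) from by ring]
    rw [hc, ← Real.exp_add, inv_mul_eq_div]
    congr 1
    ring
  rw [step1, hInt, hE, Real.log_div (Real.exp_ne_zero _) (by positivity), Real.log_exp,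
    Real.log_sqrt hu1.le]
  rcases le_total a 0 with ha | ha
  · rw [max_eq_right ha]
    have h1 : 1 - 2 * 0 * y = 1 := by ring
    rw [h1, div_one]
    have hw : 0 ≤ -(2*(a*y)) := by nlinarith
    have hlb := aux_logB hw
    rw [show (1 + -(2*(a*y))) = 1 - 2*(a*y) from by ring] at hlb
    have hbterm : (y*b)^2/(4*p) ≤ b^2*y^2/2 := by
      have h2le : (2:ℝ) ≤ 4*p := by rw [h2p]; nlinarith
      calc (y*b)^2/(4*p) ≤ (y*b)^2/2 := by gcongr
        _ = b^2*y^2/2 := by ring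
    nlinarith [hlb, hbterm]
  · rw [max_eq_left ha]
    have hu0 : 0 ≤ 2*(a*y) := by nlinarith
    have ht : 1 ≤ (1-2*(a*y))⁻¹ := by
      rw [le_inv_comm₀ one_pos hu1]
      · linarith
    have hlA := aux_logA ht
    rw [inv_inv, Real.log_inv] at hlA
    have hinv : (1-2*(a*y)) * (1-2*(a*y))⁻¹ = 1 := mul_inv_cancel₀ hu1.ne'
    rw [show 1 - 2 * a * y = 1 - 2*(a*y) from by ring, le_div_iff₀ hu1]
    have hb2 : (y*b)^2/(4*p) * (1-2*(a*y)) = (y*b)^2/2 := by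
      rw [h2p, div_mul_eq_mul_div, mul_div_mul_right _ _ hu1.ne']
    nlinarith [hlA, hinv, hb2, mul_pos hu1 hu1, sq_nonneg (y*b)]
end
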